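/- For a standard double bubble in the plane parameterized by the angle θ ∈ (0, π/3) between the interior arc and its chord, the ratio of perimeter to diameter equals f(θ) = (8π sin θ cos θ + 3√3 θ)/(6 sin θ cos θ + 3 sin θ), and f(θ) > π for all θ ∈ (0, π/3). -/

import Mathlib

open Real

/-- Length of a circular arc subtended by a chord of length `C` that it meets
at angle `θ`. -/
noncomputable def arcLen (θ C : ℝ) : ℝ := C * θ / Real.sin θ

set_option maxHeartbeats 2000000 in
theorem stmt16 (θ C P D f : ℝ) (hθ : θ ∈ Set.Ioo 0 (π / 3)) (hC : 0 < C)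
    (hP : P = arcLen (2 * π / 3 + θ) C + arcLen (2 * π / 3 - θ) C + arcLen θ C)
    (hD : D = C * ((1 + Real.cos (π / 3 - θ)) / (2 * Real.sin (2 * π / 3 + θ)) +
                   (1 + Real.cos (π / 3 + θ)) / (2 * Real.sin (2 * π / 3 - θ))))
    (hf : f = (8 * π * Real.sin θ * Real.cos θ + 3 * Real.sqrt 3 * θ) /
              (6 * Real.sin θ * Real.cos θ + 3 * Real.sin θ)) :
    P / D = f ∧ f > π := by
  obtain ⟨hθ0, hθ1⟩ := hθ
  have hπ := Real.pi_pos
  set s := Real.sin θ with hs_def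
  set c := Real.cos θ with hc_def
  set r := Real.sqrt 3 with hr_def
  have hr0 : (0:ℝ) < r := Real.sqrt_pos.mpr (by norm_num)
  have hr2 : r ^ 2 = 3 := Real.sq_sqrt (by norm_num)
  have hpy : s ^ 2 + c ^ 2 = 1 := Real.sin_sq_add_cos_sq θ
  have hθπ : θ < π := by nlinarith
  have hs0 : 0 < s := Real.sin_pos_of_pos_of_lt_pi hθ0 hθπ
  have hc12 : 1 / 2 < c := by
    have := Real.cos_lt_cos_of_nonneg_of_le_pi (le_of_lt hθ0) (by nlinarith) hθ1
    rwa [Real.cos_pi_div_three] at this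
  have hsr : s < r / 2 := by
    have h1 : s < Real.sin (π / 3) :=
      Real.sin_lt_sin_of_lt_of_le_pi_div_two (by linarith) (by linarith) hθ1
    rwa [Real.sin_pi_div_three] at h1
  have hA : Real.sin (2 * π / 3 + θ) = (r * c - s) / 2 := by
    have h23 : 2 * π / 3 = π - π / 3 := by ring
    rw [Real.sin_add, h23, Real.sin_pi_sub, Real.cos_pi_sub,
      Real.sin_pi_div_three, Real.cos_pi_div_three]
    ring
  have hB : Real.sin (2 * π / 3 - θ) = (r * c + s) / 2 := by
    have h23 : 2 * π / 3 = π - π / 3 := by ring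
    rw [Real.sin_sub, h23, Real.sin_pi_sub, Real.cos_pi_sub,
      Real.sin_pi_div_three, Real.cos_pi_div_three]
    ring
  have hca : Real.cos (π / 3 - θ) = c / 2 + r * s / 2 := by
    rw [Real.cos_sub, Real.sin_pi_div_three, Real.cos_pi_div_three]; ring
  have hcb : Real.cos (π / 3 + θ) = c / 2 - r * s / 2 := by
    rw [Real.cos_add, Real.sin_pi_div_three, Real.cos_pi_div_three]; ring
  have hAn : 0 < r * c - s := by nlinarith
  have hBn : 0 < r * c + s := by nlinarith
  have h2c1 : 0 < 2 * c - 1 := by linarith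
  have h2c2 : 0 < 2 * c + 1 := by linarith
  -- D formula
  have hD2 : D = C * r / (2 * c - 1) := by
    rw [hD, hca, hcb, hA, hB]
    have := hAn.ne'; have := hBn.ne'; have : c*r - s ≠ 0 := by rw [mul_comm]; exact hAn.ne'
    have : c*2 - 1 ≠ 0 := by linarith
    field_simp
    ring_nf
    linear_combination (4*c*r) * hpy - (2*c^2*r) * hr2
  have hD0 : 0 < D := by rw [hD2]; positivity
  have hden : 0 < 6 * s * c + 3 * s := by nlinarith
  -- key inequality
  have hkey : 0 < 3 * r * θ - 3 * π * s + π * Real.sin (2 * θ) := by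
    have conc : StrictConcaveOn ℝ (Set.Icc 0 (π / 3))
        (fun x : ℝ => 3 * r * x - 3 * π * Real.sin x + π * Real.sin (2 * x)) := by
      apply strictConcaveOn_of_deriv2_neg (convex_Icc _ _)
      · fun_prop
      · intro x hx
        rw [interior_Icc] at hx
        have hd1 : deriv (fun x : ℝ => 3 * r * x - 3 * π * Real.sin x + π * Real.sin (2 * x))
            = fun x : ℝ => 3 * r - 3 * π * Real.cos x + 2 * π * Real.cos (2 * x) := by
          funext y
          have h1 : HasDerivAt (fun x : ℝ => 3 * r * x - 3 * π * Real.sin x + π * Real.sin (2 * x))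
              (3 * r - 3 * π * Real.cos y + 2 * π * Real.cos (2 * y)) y := by
            have ha : HasDerivAt (fun x : ℝ => 3 * r * x) (3 * r) y := by
              simpa using (hasDerivAt_id y).const_mul (3 * r)
            have hb : HasDerivAt (fun x : ℝ => 3 * π * Real.sin x) (3 * π * Real.cos y) y :=
              (Real.hasDerivAt_sin y).const_mul (3 * π)
            have hc2 : HasDerivAt (fun x : ℝ => 2 * x) (2 : ℝ) y := by
              simpa using (hasDerivAt_id y).const_mul (2 : ℝ)
            have hcc : HasDerivAt (fun x : ℝ => Real.sin (2 * x)) (Real.cos (2 * y) * 2) y :=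
              (Real.hasDerivAt_sin (2 * y)).comp y hc2
            have := (ha.sub hb).add ((hcc.const_mul π))
            exact this.congr_deriv (by ring)
          exact h1.deriv
        simp only [Function.iterate_succ, Function.iterate_zero, Function.comp_apply, id_eq]
        rw [hd1]
        have h2 : HasDerivAt (fun x : ℝ => 3 * r - 3 * π * Real.cos x + 2 * π * Real.cos (2 * x))
            (3 * π * Real.sin x - 4 * π * Real.sin (2 * x)) x := by
          have hb : HasDerivAt (fun x : ℝ => 3 * π * Real.cos x) (3 * π * (-Real.sin x)) x :=
            (Real.hasDerivAt_cos x).const_mul (3 * π)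
          have hc2 : HasDerivAt (fun x : ℝ => 2 * x) (2 : ℝ) x := by
            simpa using (hasDerivAt_id x).const_mul (2 : ℝ)
          have hcc : HasDerivAt (fun x : ℝ => Real.cos (2 * x)) (-Real.sin (2 * x) * 2) x :=
            (Real.hasDerivAt_cos (2 * x)).comp x hc2
          have := ((hasDerivAt_const x (3 * r)).sub hb).add (hcc.const_mul (2 * π))
          exact this.congr_deriv (by ring)
        rw [h2.deriv]
        have hx0 : 0 < x := hx.1
        have hx1 : x < π / 3 := hx.2
        have hsx : 0 < Real.sin x := Real.sin_pos_of_pos_of_lt_pi hx0 (by nlinarith)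
        have hcx : 1 / 2 < Real.cos x := by
          have := Real.cos_lt_cos_of_nonneg_of_le_pi (le_of_lt hx0) (by nlinarith) hx1
          rwa [Real.cos_pi_div_three] at this
        have h2x : Real.sin (2 * x) = 2 * Real.sin x * Real.cos x := Real.sin_two_mul x
        have hprod : 0 < π * Real.sin x * (8 * Real.cos x - 3) :=
          mul_pos (mul_pos hπ hsx) (by linarith)
        rw [h2x]
        nlinarith [hprod]
    have h0 : (0 : ℝ) ∈ Set.Icc (0:ℝ) (π / 3) := by constructor <;> positivity
    have h1 : (π / 3) ∈ Set.Icc (0:ℝ) (π / 3) := by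
      constructor
      · positivity
      · exact le_rfl
    have hne : (0 : ℝ) ≠ π / 3 := ne_of_lt (by positivity)
    have ha : 0 < 1 - θ / (π / 3) := by
      rw [sub_pos, div_lt_one (by positivity)]
      exact hθ1
    have hb : 0 < θ / (π / 3) := by positivity
    have hab : (1 - θ / (π / 3)) + θ / (π / 3) = 1 := by ring
    have := conc.2 h0 h1 hne ha hb hab
    have hθeq : (1 - θ / (π / 3)) • (0:ℝ) + (θ / (π / 3)) • (π / 3) = θ := by
      rw [smul_eq_mul, smul_eq_mul]
      field_simp
      ring
    rw [hθeq] at this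
    have hv0 : (3 * r * (0:ℝ) - 3 * π * Real.sin 0 + π * Real.sin (2 * 0)) = 0 := by
      simp
    have hv1 : (3 * r * (π / 3) - 3 * π * Real.sin (π / 3) + π * Real.sin (2 * (π / 3))) = 0 := by
      have h23 : 2 * (π / 3) = π - π / 3 := by ring
      rw [h23, Real.sin_pi_sub, Real.sin_pi_div_three]
      ring
    simp only [smul_eq_mul] at this
    rw [hv0, hv1] at this
    simpa using this
  constructor
  · rw [div_eq_iff (ne_of_gt hD0), hP, hf, hD2, arcLen, arcLen, arcLen, hA, hB, ← hs_def]
    have := hAn.ne'; have := hBn.ne'; have := h2c1.ne'; have := hs0.ne'; have := hden.ne'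
    field_simp
    ring_nf
    linear_combination (36*c^4*θ - 36*c^2*θ - 24*s*c^3*r*π - 9*c^2*r^2*θ + 9*s^2*θ) * hr2 + (108*c^2*θ + 24*s*c*r*π) * hpy
  · rw [hf, gt_iff_lt, lt_div_iff₀ hden]
    have h2 : Real.sin (2 * θ) = 2 * s * c := Real.sin_two_mul θ
    nlinarith [hkey]
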